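/- Let H be a reduced atomic cancellative monoid which is finitely presented by its set of atoms A(H) and a finite set of relations R, i.e., H is isomorphic to the quotient of the free monoid on A(H) by the congruence generated by the finite set R of pairs of words. Then the set of distances Δ(H) is finite; more precisely, Δ(H) ⊆ [1, M] where M = max { | |x| − |y| | : (x, y) ∈ R } and |·| is word length. -/

import Mathlib

open scoped Classical ENNReal

/-- The set of lengths of `a`: all `k` such that `a` is a product of `k` irreducibles,
with the convention `L(a) = {0}` for units. -/
noncomputable def lengths {M : Type*} [Monoid M] (a : M) : Set ℕ :=
  if IsUnit a then {0}
  else {k | ∃ l : List M, l.length = k ∧ (∀ x ∈ l, Irreducible x) ∧ l.prod = a}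

/-- A monoid is atomic if every nonunit is a finite product of irreducibles (atoms). -/
def Atomic (M : Type*) [Monoid M] : Prop :=
  ∀ a : M, ¬IsUnit a → ∃ l : List M, (∀ x ∈ l, Irreducible x) ∧ l.prod = a

/-- The set of distances of a set `L ⊆ ℕ`. -/
def distances (L : Set ℕ) : Set ℕ :=
  {d | 0 < d ∧ ∃ k ∈ L, k + d ∈ L ∧ ∀ m ∈ L, k ≤ m → m ≤ k + d → m = k ∨ m = k + d}

/-- The set of distances `Δ(H)` of a monoid. -/
def DeltaH (M : Type*) [Monoid M] : Set ℕ :=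
  ⋃ a : M, distances (lengths a)

/-- The union `U_k(H)` of all sets of lengths containing `k`. -/
def lengthUnion (M : Type*) [Monoid M] (k : ℕ) : Set ℕ :=
  {ℓ | ∃ l1 l2 : List M, l1.length = k ∧ l2.length = ℓ ∧
      (∀ x ∈ l1, Irreducible x) ∧ (∀ x ∈ l2, Irreducible x) ∧ l1.prod = l2.prod}

/-- The `k`-th elasticity `ρ_k(H) = sup U_k(H)`, valued in `ℝ≥0∞`. -/
noncomputable def rhoK (M : Type*) [Monoid M] (k : ℕ) : ℝ≥0∞ :=
  ⨆ ℓ ∈ lengthUnion M k, (ℓ : ℝ≥0∞)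

/-- `λ_k(H) = min U_k(H)`. -/
noncomputable def lamK (M : Type*) [Monoid M] (k : ℕ) : ℕ :=
  sInf (lengthUnion M k)

/-- The elasticity `ρ(L) = sup L / min L` of a set of lengths, with `ρ({0}) = 1`. -/
noncomputable def setElasticity (L : Set ℕ) : ℝ≥0∞ :=
  if L = {0} then 1 else (⨆ n ∈ L, (n : ℝ≥0∞)) / ((sInf L : ℕ) : ℝ≥0∞)

/-- The elasticity `ρ(H) = sup { ρ(L(a)) : a ∈ H }`. -/
noncomputable def elasticity (M : Type*) [Monoid M] : ℝ≥0∞ :=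
  ⨆ a : M, setElasticity (lengths a)

/-- The principal left ideal `Ha`. -/
def leftIdeal {M : Type*} [Monoid M] (a : M) : Set M := Set.range (· * a)

/-- The principal right ideal `aH`. -/
def rightIdeal {M : Type*} [Monoid M] (a : M) : Set M := Set.range (a * ·)

/-- `A` is a generating set of the monoid `M`. -/
def Generates {M : Type*} [Monoid M] (A : Set M) : Prop :=
  ∀ a : M, ∃ l : List M, (∀ x ∈ l, x ∈ A) ∧ l.prod = a

namespace Stmt10Aux

variable {M : Type*} [Monoid M]

/-- One-step rewriting relation using a relation from `R` (in either direction). -/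
def Step (R : Finset (FreeMonoid {a : M // Irreducible a} × FreeMonoid {a : M // Irreducible a}))
    (u v : FreeMonoid {a : M // Irreducible a}) : Prop :=
  ∃ p q a b, ((a, b) ∈ R ∨ (b, a) ∈ R) ∧ u = p * a * q ∧ v = p * b * q

variable {R : Finset (FreeMonoid {a : M // Irreducible a} × FreeMonoid {a : M // Irreducible a})}

lemma step_symm : Symmetric (Step R) := by
  rintro u v ⟨p, q, a, b, hab, hu, hv⟩
  exact ⟨p, q, b, a, hab.symm, hv, hu⟩

lemma step_mul_right (c : FreeMonoid {a : M // Irreducible a}) {u v}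
    (h : Step R u v) : Step R (u * c) (v * c) := by
  obtain ⟨p, q, a, b, hab, hu, hv⟩ := h
  exact ⟨p, q * c, a, b, hab, by rw [hu]; simp [mul_assoc], by rw [hv]; simp [mul_assoc]⟩

lemma step_mul_left (c : FreeMonoid {a : M // Irreducible a}) {u v}
    (h : Step R u v) : Step R (c * u) (c * v) := by
  obtain ⟨p, q, a, b, hab, hu, hv⟩ := h
  exact ⟨c * p, q, a, b, hab, by rw [hu]; simp [mul_assoc], by rw [hv]; simp [mul_assoc]⟩

/-- The congruence given by chains of one-step rewrites. -/
def chainCon (R : Finset (FreeMonoid {a : M // Irreducible a} ×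
    FreeMonoid {a : M // Irreducible a})) : Con (FreeMonoid {a : M // Irreducible a}) where
  r u v := Relation.ReflTransGen (Step R) u v
  iseqv := ⟨fun _ => Relation.ReflTransGen.refl,
    fun h => by
      haveI : Std.Symm (Step R) := ⟨fun _ _ h => step_symm h⟩
      exact Std.Symm.symm _ _ h,
    fun h1 h2 => h1.trans h2⟩
  mul' := by
    intro w x y z h1 h2
    have ha : Relation.ReflTransGen (Step R) (w * y) (x * y) :=
      Relation.ReflTransGen.lift (· * y) (fun _ _ h => step_mul_right y h) _ _ h1
    have hb : Relation.ReflTransGen (Step R) (x * y) (x * z) :=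
      Relation.ReflTransGen.lift (x * ·) (fun _ _ h => step_mul_left x h) _ _ h2
    exact ha.trans hb

lemma conGen_le_chain : (conGen fun x y => (x, y) ∈ R) ≤ chainCon R := by
  apply Con.conGen_le.mpr
  intro x y hxy
  exact Relation.ReflTransGen.single ⟨1, 1, x, y, Or.inl hxy, by simp, by simp⟩

end Stmt10Aux

open Stmt10Aux in
theorem stmt10 {M : Type*} [CancelMonoid M]
    (hred : ∀ u : M, IsUnit u → u = 1) (hA : Atomic M)
    (R : Finset (FreeMonoid {a : M // Irreducible a} × FreeMonoid {a : M // Irreducible a}))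
    (hsurj : Function.Surjective
      (FreeMonoid.lift (fun a : {a : M // Irreducible a} => (a : M))))
    (hker : Con.ker (FreeMonoid.lift (fun a : {a : M // Irreducible a} => (a : M))) =
      conGen fun x y => (x, y) ∈ R) :
    DeltaH M ⊆ Set.Icc 1
      (R.sup fun p => (p.1.length - p.2.length) ⊔ (p.2.length - p.1.length)) := by
  set ψ := FreeMonoid.lift (fun a : {a : M // Irreducible a} => (a : M)) with hψdef
  set Mb := R.sup fun p => (p.1.length - p.2.length) ⊔ (p.2.length - p.1.length) with hMb
  -- ψ is preserved along one-step rewrites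
  have hψR : ∀ x y : FreeMonoid {a : M // Irreducible a}, (x, y) ∈ R → ψ x = ψ y := by
    intro x y hxy
    have : (conGen fun x y => (x, y) ∈ R) x y := ConGen.Rel.of _ _ hxy
    rw [← hker] at this
    exact this
  have hψstep : ∀ {u v}, Step R u v → ψ u = ψ v := by
    rintro u v ⟨p, q, a, b, hab, hu, hv⟩
    have : ψ a = ψ b := by
      rcases hab with h | h
      · exact hψR _ _ h
      · exact (hψR _ _ h).symm
    rw [hu, hv, map_mul, map_mul, map_mul, map_mul, this]
  have hψchain : ∀ {u v}, Relation.ReflTransGen (Step R) u v → ψ u = ψ v := by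
    intro u v h
    induction h with
    | refl => rfl
    | tail _ hstep ih => exact ih.trans (hψstep hstep)
  -- length changes by at most Mb along one-step rewrites
  have hlenstep : ∀ {u v}, Step R u v → FreeMonoid.length v ≤ FreeMonoid.length u + Mb := by
    rintro u v ⟨p, q, a, b, hab, hu, hv⟩
    have hR : a.length - b.length ≤ Mb ∧ b.length - a.length ≤ Mb := by
      rcases hab with h | h
      · have := Finset.le_sup (f := fun p => (p.1.length - p.2.length) ⊔
          (p.2.length - p.1.length)) h
        simp only [sup_le_iff] at this ⊢
        omega
      · have := Finset.le_sup (f := fun p => (p.1.length - p.2.length) ⊔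
          (p.2.length - p.1.length)) h
        simp only [sup_le_iff] at this ⊢
        omega
    rw [hu, hv, FreeMonoid.length_mul, FreeMonoid.length_mul, FreeMonoid.length_mul,
      FreeMonoid.length_mul]
    omega
  intro d hd
  simp only [DeltaH, Set.mem_iUnion] at hd
  obtain ⟨a, hdpos, k, hk, hkd, hgap⟩ := hd
  have hau : ¬ IsUnit a := by
    intro h
    rw [lengths, if_pos h] at hk hkd
    simp only [Set.mem_singleton_iff] at hk hkd
    omega
  rw [lengths, if_neg hau] at hk hkd
  obtain ⟨l1, hl1len, hl1irr, hl1prod⟩ := hk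
  obtain ⟨l2, hl2len, hl2irr, hl2prod⟩ := hkd
  -- lift the factorizations to words in the free monoid
  set x : FreeMonoid {a : M // Irreducible a} :=
    FreeMonoid.ofList (l1.attach.map fun z => (⟨z.1, hl1irr z.1 z.2⟩ : {a : M // Irreducible a}))
  set y : FreeMonoid {a : M // Irreducible a} :=
    FreeMonoid.ofList (l2.attach.map fun z => (⟨z.1, hl2irr z.1 z.2⟩ : {a : M // Irreducible a}))
  have hψx : ψ x = a := by
    rw [hψdef, FreeMonoid.lift_ofList, List.map_map]
    simpa using hl1prod
  have hψy : ψ y = a := by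
    rw [hψdef, FreeMonoid.lift_ofList, List.map_map]
    simpa using hl2prod
  have hxlen : FreeMonoid.length x = k := by
    show (List.map _ l1.attach).length = k
    simp [hl1len]
  have hylen : FreeMonoid.length y = k + d := by
    show (List.map _ l2.attach).length = k + d
    simp [hl2len]
  -- every word mapping to a gives a length of a
  have hmemlen : ∀ w : FreeMonoid {a : M // Irreducible a}, ψ w = a →
      FreeMonoid.length w ∈ lengths a := by
    intro w hw
    rw [lengths, if_neg hau]
    refine ⟨w.toList.map Subtype.val, by rw [List.length_map]; rfl, ?_, ?_⟩
    · intro z hz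
      simp only [List.mem_map] at hz
      obtain ⟨⟨z', hz'⟩, _, rfl⟩ := hz
      exact hz'
    · rw [← hw, hψdef, FreeMonoid.lift_apply]
  -- chain from x to y
  have hchain : Relation.ReflTransGen (Step R) x y := by
    have hker' : (conGen fun x y => (x, y) ∈ R) x y := by
      rw [← hker]
      rw [Con.ker_rel]
      rw [hψx, hψy]
    exact Con.le_def.mp conGen_le_chain hker'
  -- the key induction: somewhere along the chain the length jumps over the gap
  have main : ∀ v, Relation.ReflTransGen (Step R) x v →
      k + d ≤ FreeMonoid.length v → d ≤ Mb := by
    intro v hv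
    induction hv with
    | refl => intro h; omega
    | @tail b c hab hbc ih =>
      intro hc
      have hψb : ψ b = a := (hψchain hab).symm.trans hψx
      have hmb := hgap _ (hmemlen b hψb)
      by_cases hcase : k + d ≤ FreeMonoid.length b
      · exact ih hcase
      · have hble : FreeMonoid.length b ≤ k := by omega
        have := hlenstep hbc
        omega
  have hd1 : d ≤ Mb := main y hchain (by omega)
  exact ⟨by omega, hd1⟩
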